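/- Let Γ = (π₁,…,πₙ) be a path of activation patterns in {0,1}^N with r₂(Γ) > 0 and χ(Γ) = 0. Then for every index 1 ≤ k ≤ n, the maximal Hamming distance to the start over the prefix equals the Hamming length of the prefix: max_{1≤j≤k} d_H(π₁, πⱼ) = Σ_{i=1}^{k−1} d_H(πᵢ, πᵢ₊₁). -/

import Mathlib

/-- `r₁(Γ)`: maximal Hamming distance to the starting pattern along the first `n`
entries of the path `Γ`. -/
def r1 {N : ℕ} (n : ℕ) (Γ : ℕ → Fin N → Bool) : ℕ :=
  (Finset.range n).sup fun i => hammingDist (Γ 0) (Γ i)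

/-- `r₂(Γ)`: total Hamming length of the path `Γ` of length `n`. -/
def r2 {N : ℕ} (n : ℕ) (Γ : ℕ → Fin N → Bool) : ℕ :=
  ∑ i ∈ Finset.range (n - 1), hammingDist (Γ i) (Γ (i + 1))

/-- The space folding measure `χ(Γ) = 1 - r₁(Γ)/r₂(Γ)`. -/
noncomputable def chi {N : ℕ} (n : ℕ) (Γ : ℕ → Fin N → Bool) : ℝ :=
  1 - (r1 n Γ : ℝ) / (r2 n Γ : ℝ)

lemma path_triangle {N : ℕ} (Γ : ℕ → Fin N → Bool) (a : ℕ) :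
    ∀ b, a ≤ b →
      hammingDist (Γ a) (Γ b) ≤ ∑ i ∈ Finset.Ico a b, hammingDist (Γ i) (Γ (i + 1)) := by
  intro b
  induction b with
  | zero => intro h; interval_cases a; simp
  | succ b ih =>
    intro h
    rcases Nat.lt_or_ge a (b + 1) with h' | h'
    · have hab : a ≤ b := Nat.lt_succ_iff.mp h'
      rw [Finset.sum_Ico_succ_top hab]
      calc hammingDist (Γ a) (Γ (b + 1))
          ≤ hammingDist (Γ a) (Γ b) + hammingDist (Γ b) (Γ (b + 1)) :=
            hammingDist_triangle _ _ _
        _ ≤ _ := by gcongr; exact ih hab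
    · have : a = b + 1 := le_antisymm h h'
      subst this; simp

/-- if `r₂(Γ) > 0` and `χ(Γ) = 0`, then for every prefix length
`1 ≤ k ≤ n` the maximal Hamming distance to the start over the prefix equals
the Hamming length of the prefix. -/
theorem flat_prefix_eq {N : ℕ} (n : ℕ) (Γ : ℕ → Fin N → Bool)
    (h2 : 0 < r2 n Γ) (hflat : chi n Γ = 0) :
    ∀ k : ℕ, 1 ≤ k → k ≤ n →
      (Finset.range k).sup (fun j => hammingDist (Γ 0) (Γ j)) =
        ∑ i ∈ Finset.range (k - 1), hammingDist (Γ i) (Γ (i + 1)) := by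
  -- r1 = r2
  have h2' : (r2 n Γ : ℝ) ≠ 0 := by exact_mod_cast h2.ne'
  have hr : r1 n Γ = r2 n Γ := by
    unfold chi at hflat
    have h3 : (r1 n Γ : ℝ) / (r2 n Γ : ℝ) = 1 := by linarith
    rw [div_eq_one_iff_eq h2'] at h3
    exact_mod_cast h3
  -- n ≥ 2
  have hn : 2 ≤ n := by
    by_contra hc
    push_neg at hc
    interval_cases n <;> simp [r2] at h2
  -- the max is achieved at some j < n
  obtain ⟨j, hjmem, hjd⟩ := Finset.exists_mem_eq_sup (Finset.range n)
    (Finset.nonempty_range_iff.mpr (by omega))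
    (fun i => hammingDist (Γ 0) (Γ i))
  rw [Finset.mem_range] at hjmem
  have hjval : hammingDist (Γ 0) (Γ j) = r2 n Γ := by
    rw [← hr, r1, hjd]
  have hjle : j ≤ n - 1 := by omega
  -- triangle from 0: hammingDist (Γ 0) (Γ b) ≤ sum over range b
  have tri : ∀ b : ℕ, hammingDist (Γ 0) (Γ b) ≤
      ∑ i ∈ Finset.range b, hammingDist (Γ i) (Γ (i + 1)) := by
    intro b
    have := path_triangle Γ 0 b (Nat.zero_le b)
    rw [Finset.range_eq_Ico]
    exact this
  -- the tail after j is zero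
  have hsplit : r2 n Γ = (∑ i ∈ Finset.range j, hammingDist (Γ i) (Γ (i + 1)))
      + ∑ i ∈ Finset.Ico j (n - 1), hammingDist (Γ i) (Γ (i + 1)) := by
    rw [r2, Finset.range_eq_Ico, ← Finset.sum_Ico_consecutive _ (Nat.zero_le j) hjle, Finset.range_eq_Ico]
  have htail : ∑ i ∈ Finset.Ico j (n - 1), hammingDist (Γ i) (Γ (i + 1)) = 0 := by
    have h1 := tri j
    omega
  have hzero : ∀ i, j ≤ i → i < n - 1 → hammingDist (Γ i) (Γ (i + 1)) = 0 := by
    intro i hi1 hi2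
    have := Finset.sum_eq_zero_iff.mp htail i (Finset.mem_Ico.mpr ⟨hi1, hi2⟩)
    exact this
  intro k hk1 hkn
  set m := k - 1 with hm
  apply le_antisymm
  · apply Finset.sup_le
    intro j' hj'
    rw [Finset.mem_range] at hj'
    calc hammingDist (Γ 0) (Γ j')
        ≤ ∑ i ∈ Finset.range j', hammingDist (Γ i) (Γ (i + 1)) := tri j'
      _ ≤ _ := Finset.sum_le_sum_of_subset
          (Finset.range_subset_range.mpr (by omega))
  · -- lower bound: the element m = k-1 witnesses
    have hmem : m ∈ Finset.range k := Finset.mem_range.mpr (by omega)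
    have key : ∑ i ∈ Finset.range m, hammingDist (Γ i) (Γ (i + 1)) ≤
        hammingDist (Γ 0) (Γ m) := by
      rcases le_or_gt m j with hmj | hjm
      · -- m ≤ j
        have hsum : ∑ i ∈ Finset.range j, hammingDist (Γ i) (Γ (i + 1)) =
            (∑ i ∈ Finset.range m, hammingDist (Γ i) (Γ (i + 1)))
            + ∑ i ∈ Finset.Ico m j, hammingDist (Γ i) (Γ (i + 1)) := by
          rw [Finset.range_eq_Ico, ← Finset.sum_Ico_consecutive _ (Nat.zero_le m) hmj, Finset.range_eq_Ico]
        have htr : hammingDist (Γ 0) (Γ j) ≤ hammingDist (Γ 0) (Γ m)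
            + hammingDist (Γ m) (Γ j) := hammingDist_triangle _ _ _
        have hmj2 : hammingDist (Γ m) (Γ j) ≤
            ∑ i ∈ Finset.Ico m j, hammingDist (Γ i) (Γ (i + 1)) := path_triangle Γ m j hmj
        -- d(0,j) = r2 ≥ sum range j
        have hge : ∑ i ∈ Finset.range j, hammingDist (Γ i) (Γ (i + 1)) ≤
            hammingDist (Γ 0) (Γ j) := by
          rw [hjval, hsplit]; omega
        omega
      · -- j < m : the path is constant from j onwards
        have hmle : m ≤ n - 1 := by omega
        have hjm2 : hammingDist (Γ j) (Γ m) ≤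
            ∑ i ∈ Finset.Ico j m, hammingDist (Γ i) (Γ (i + 1)) := path_triangle Γ j m hjm.le
        have hz : ∑ i ∈ Finset.Ico j m, hammingDist (Γ i) (Γ (i + 1)) = 0 := by
          apply Finset.sum_eq_zero
          intro i hi
          rw [Finset.mem_Ico] at hi
          exact hzero i hi.1 (by omega)
        have htr : hammingDist (Γ 0) (Γ j) ≤ hammingDist (Γ 0) (Γ m)
            + hammingDist (Γ j) (Γ m) := by
          calc hammingDist (Γ 0) (Γ j) ≤ hammingDist (Γ 0) (Γ m)
              + hammingDist (Γ m) (Γ j) := hammingDist_triangle _ _ _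
            _ = _ := by rw [hammingDist_comm (Γ m) (Γ j)]
        have hsub : ∑ i ∈ Finset.range m, hammingDist (Γ i) (Γ (i + 1)) ≤
            ∑ i ∈ Finset.range (n - 1), hammingDist (Γ i) (Γ (i + 1)) :=
          Finset.sum_le_sum_of_subset (Finset.range_subset_range.mpr hmle)
        have hjr2 : hammingDist (Γ 0) (Γ j) = r2 n Γ := hjval
        rw [r2] at hjr2
        omega
    exact le_trans key (Finset.le_sup (f := fun j => hammingDist (Γ 0) (Γ j)) hmem)
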